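/- The sum of independent Bernoulli random variables converges to Poisson in the infinitesimal limit (law of rare events, finite quantitative version): if Z₁,…,Z_K are independent Bernoulli(π_k) with Σ_k π_k = λ, then the total variation distance between the law of Σ_k Z_k and the Poisson(λ) distribution is at most Σ_{k=1}^K π_k². -/

import Mathlib

open Finset

/-- Poisson-binomial pmf (zero for s > K). -/
def poiBin {K : ℕ} (π : Fin K → ℝ) (s : ℕ) : ℝ :=
  ∑ w ∈ Finset.univ.filter (fun w : Fin K → Bool => (Finset.univ.filter (fun k => w k)).card = s),
    ∏ k, (π k) ^ (if w k then 1 else 0 : ℕ) * (1 - π k) ^ (if w k then 0 else 1 : ℕ)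

/-- Poisson pmf with rate λ. -/
noncomputable def poissonPMF (lam : ℝ) (s : ℕ) : ℝ :=
  Real.exp (-lam) * lam ^ s / (Nat.factorial s : ℝ)

/-- Bernoulli pmf. -/
def bern (p : ℝ) (s : ℕ) : ℝ := if s = 0 then 1 - p else if s = 1 then p else 0

/-- Convolution of two pmfs on ℕ. -/
def conv (f g : ℕ → ℝ) (s : ℕ) : ℝ := ∑ kl ∈ Finset.HasAntidiagonal.antidiagonal s, f kl.1 * g kl.2

lemma poiBin_zero (π : Fin 0 → ℝ) (s : ℕ) : poiBin π s = if s = 0 then 1 else 0 := by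
  unfold poiBin
  rcases s with _ | s <;> simp [Finset.filter_eq_self, Finset.filter_false_of_mem]

lemma poiBin_succ_core {K : ℕ} (π : Fin (K+1) → ℝ) (s : ℕ) :
    poiBin π s = (∑ x : Fin K → Bool,
        if ((1:ℕ) + ∑ x_1 : Fin K, if x x_1 = true then 1 else 0) = s then
          π 0 * ∏ x_1 : Fin K,
              (π x_1.succ ^ if x x_1 = true then 1 else 0) * (1 - π x_1.succ) ^ if x x_1 = true then 0 else 1
        else 0) +
      ∑ x : Fin K → Bool,
        if ((∑ x_1 : Fin K, if x x_1 = true then 1 else 0) = s) then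
          (1 - π 0) * ∏ x_1 : Fin K,
              (π x_1.succ ^ if x x_1 = true then 1 else 0) * (1 - π x_1.succ) ^ if x x_1 = true then 0 else 1
        else 0 := by
  unfold poiBin
  rw [Finset.sum_filter]
  rw [← Equiv.sum_comp (Fin.consEquiv fun _ => Bool)]
  rw [Fintype.sum_prod_type]
  rw [Fintype.sum_bool]
  simp only [Fin.consEquiv_apply, Finset.card_filter, Fin.sum_univ_succ, Fin.prod_univ_succ,
    Fin.cons_zero, Fin.cons_succ, if_true, if_false, pow_zero, pow_one, one_mul, mul_one,
    Bool.false_eq_true, zero_add]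

lemma poiBin_core_eq {K : ℕ} (π : Fin (K+1) → ℝ) (s : ℕ) :
    (∑ x : Fin K → Bool,
        if ((∑ x_1 : Fin K, if x x_1 = true then 1 else 0) = s) then
          (1 - π 0) * ∏ x_1 : Fin K,
              (π x_1.succ ^ if x x_1 = true then 1 else 0) * (1 - π x_1.succ) ^ if x x_1 = true then 0 else 1
        else 0) = (1 - π 0) * poiBin (π ∘ Fin.succ) s := by
  unfold poiBin
  rw [Finset.sum_filter, Finset.mul_sum]
  refine Finset.sum_congr rfl fun w _ => ?_
  simp only [Function.comp_apply, mul_ite, mul_zero, Finset.card_filter]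

lemma poiBin_succ_zero {K : ℕ} (π : Fin (K+1) → ℝ) :
    poiBin π 0 = (1 - π 0) * poiBin (π ∘ Fin.succ) 0 := by
  rw [poiBin_succ_core, poiBin_core_eq]
  have : ∀ x : Fin K → Bool, (if ((1:ℕ) + ∑ x_1 : Fin K, if x x_1 = true then 1 else 0) = 0 then
      π 0 * ∏ x_1 : Fin K,
        (π x_1.succ ^ if x x_1 = true then 1 else 0) * (1 - π x_1.succ) ^ if x x_1 = true then 0 else 1
      else 0) = 0 := fun x => if_neg (by omega)
  rw [Finset.sum_congr rfl fun x _ => this x]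
  simp

lemma poiBin_succ_pos {K : ℕ} (π : Fin (K+1) → ℝ) (t : ℕ) :
    poiBin π (t+1) = (1 - π 0) * poiBin (π ∘ Fin.succ) (t+1) + π 0 * poiBin (π ∘ Fin.succ) t := by
  rw [poiBin_succ_core, poiBin_core_eq, add_comm]
  congr 1
  unfold poiBin
  rw [Finset.sum_filter, Finset.mul_sum]
  refine Finset.sum_congr rfl fun w _ => ?_
  have : ((1:ℕ) + ∑ x_1 : Fin K, if w x_1 = true then 1 else 0) = t + 1 ↔
      ((∑ x_1 : Fin K, if w x_1 = true then 1 else 0) = t) := by omega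
  rw [if_congr this rfl rfl]
  simp only [Function.comp_apply, mul_ite, mul_zero, Finset.card_filter]

lemma conv_bern_zero (p : ℝ) (g : ℕ → ℝ) : conv (bern p) g 0 = (1 - p) * g 0 := by
  simp [conv, bern]

lemma conv_bern_pos (p : ℝ) (g : ℕ → ℝ) (t : ℕ) :
    conv (bern p) g (t+1) = (1 - p) * g (t+1) + p * g t := by
  unfold conv
  rw [Finset.Nat.sum_antidiagonal_eq_sum_range_succ_mk]
  rw [Finset.sum_range_succ', Finset.sum_range_succ']
  have : ∀ i ∈ Finset.range t, bern p (i+1+1) * g (t+1 - (i+1+1)) = 0 := by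
    intro i _; simp [bern]
  rw [Finset.sum_congr rfl this]
  simp [bern]
  ring

lemma poiBin_succ {K : ℕ} (π : Fin (K+1) → ℝ) (s : ℕ) :
    poiBin π s = conv (bern (π 0)) (poiBin (π ∘ Fin.succ)) s := by
  cases s with
  | zero => rw [poiBin_succ_zero, conv_bern_zero]
  | succ t => rw [poiBin_succ_pos, conv_bern_pos]

lemma conv_poisson (a b : ℝ) (s : ℕ) :
    conv (poissonPMF a) (poissonPMF b) s = poissonPMF (a + b) s := by
  unfold conv poissonPMF
  rw [Finset.Nat.sum_antidiagonal_eq_sum_range_succ_mk]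
  rw [add_pow]
  rw [Finset.mul_sum, Finset.sum_div]
  refine Finset.sum_congr rfl fun i hi => ?_
  have hi' : i ≤ s := Nat.lt_succ_iff.mp (Finset.mem_range.mp hi)
  rw [Nat.cast_choose ℝ hi']
  have h1 : (Nat.factorial i : ℝ) ≠ 0 := Nat.cast_ne_zero.mpr (Nat.factorial_ne_zero i)
  have h2 : (Nat.factorial (s - i) : ℝ) ≠ 0 := Nat.cast_ne_zero.mpr (Nat.factorial_ne_zero _)
  have h3 : (Nat.factorial s : ℝ) ≠ 0 := Nat.cast_ne_zero.mpr (Nat.factorial_ne_zero s)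
  rw [neg_add, Real.exp_add]
  simp only
  field_simp

lemma poiBin_nonneg {K : ℕ} {π : Fin K → ℝ} (hπ : ∀ k, π k ∈ Set.Icc (0:ℝ) 1) (s : ℕ) :
    0 ≤ poiBin π s := by
  refine Finset.sum_nonneg fun w _ => Finset.prod_nonneg fun k _ => mul_nonneg ?_ ?_
  · exact pow_nonneg (hπ k).1 _
  · exact pow_nonneg (by linarith [(hπ k).2]) _

lemma poiBin_eq_zero {K : ℕ} (π : Fin K → ℝ) {s : ℕ} (h : K < s) : poiBin π s = 0 := by
  unfold poiBin
  rw [Finset.filter_false_of_mem, Finset.sum_empty]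
  intro w _
  have : (Finset.univ.filter (fun k => w k)).card ≤ K := by
    simpa using Finset.card_filter_le Finset.univ (fun k => w k = true)
  omega

lemma poiBin_summable {K : ℕ} (π : Fin K → ℝ) : Summable (poiBin π) := by
  apply summable_of_ne_finset_zero (s := Finset.range (K+1))
  intro s hs
  exact poiBin_eq_zero π (by simpa using hs)

lemma bern_summable (p : ℝ) : Summable (bern p) := by
  apply summable_of_ne_finset_zero (s := Finset.range 2)
  intro s hs
  simp only [Finset.mem_range] at hs
  have h0 : s ≠ 0 := by omega
  have h1 : s ≠ 1 := by omega
  simp [bern, h0, h1]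

lemma tsum_bern (p : ℝ) : ∑' s, bern p s = 1 := by
  rw [tsum_eq_sum (s := Finset.range 2)]
  · simp [Finset.sum_range_succ, bern]
  · intro s hs
    simp only [Finset.mem_range] at hs
    have h0 : s ≠ 0 := by omega
    have h1 : s ≠ 1 := by omega
    simp [bern, h0, h1]

lemma poisson_summable (lam : ℝ) : Summable (poissonPMF lam) := by
  unfold poissonPMF
  simp_rw [mul_div_assoc]
  exact (Real.summable_pow_div_factorial lam).mul_left _

lemma poisson_nonneg {lam : ℝ} (h : 0 ≤ lam) (s : ℕ) : 0 ≤ poissonPMF lam s := by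
  unfold poissonPMF
  positivity

lemma tsum_poisson (lam : ℝ) : ∑' s, poissonPMF lam s = 1 := by
  unfold poissonPMF
  simp_rw [mul_div_assoc]
  rw [tsum_mul_left]
  have : ∑' s : ℕ, lam ^ s / (Nat.factorial s : ℝ) = Real.exp lam := by
    rw [Real.exp_eq_exp_ℝ, NormedSpace.exp_eq_tsum_div]
  rw [this, ← Real.exp_add]
  simp

lemma tsum_poiBin : ∀ {K : ℕ} (π : Fin K → ℝ), ∑' s, poiBin π s = 1 := by
  intro K
  induction K with
  | zero =>
    intro π
    rw [tsum_eq_single 0 (fun b hb => by simp [poiBin_zero, hb])]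
    simp [poiBin_zero]
  | succ K ih =>
    intro π
    have h : poiBin π = fun s => conv (bern (π 0)) (poiBin (π ∘ Fin.succ)) s :=
      funext (poiBin_succ π)
    have hb : Summable fun s => ‖bern (π 0) s‖ :=
      summable_abs_iff.mpr (bern_summable _)
    have hg : Summable fun s => ‖poiBin (π ∘ Fin.succ) s‖ :=
      summable_abs_iff.mpr (poiBin_summable _)
    rw [h]
    unfold conv
    rw [← tsum_mul_tsum_eq_tsum_sum_antidiagonal_of_summable_norm hb hg]
    rw [tsum_bern, ih]
    norm_num

lemma abs_conv_le (h g : ℕ → ℝ) (hgn : ∀ s, 0 ≤ g s) (s : ℕ) :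
    |conv h g s| ≤ conv (fun x => |h x|) g s := by
  refine (Finset.abs_sum_le_sum_abs _ _).trans (le_of_eq (Finset.sum_congr rfl fun kl _ => ?_))
  rw [abs_mul, abs_of_nonneg (hgn kl.2)]

lemma abs_conv_le' (f h : ℕ → ℝ) (hfn : ∀ s, 0 ≤ f s) (s : ℕ) :
    |conv f h s| ≤ conv f (fun x => |h x|) s := by
  refine (Finset.abs_sum_le_sum_abs _ _).trans (le_of_eq (Finset.sum_congr rfl fun kl _ => ?_))
  rw [abs_mul, abs_of_nonneg (hfn kl.1)]

lemma conv_summable {f g : ℕ → ℝ} (hf : Summable fun s => |f s|)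
    (hg : Summable fun s => |g s|) : Summable (conv f g) := by
  have := summable_norm_sum_mul_antidiagonal_of_summable_norm (R := ℝ)
    (f := f) (g := g) (by simpa using hf) (by simpa using hg)
  exact this.of_norm

lemma tsum_conv {f g : ℕ → ℝ} (hf : Summable fun s => |f s|)
    (hg : Summable fun s => |g s|) :
    ∑' s, conv f g s = (∑' s, f s) * ∑' s, g s := by
  unfold conv
  rw [← tsum_mul_tsum_eq_tsum_sum_antidiagonal_of_summable_norm
    (by simpa using hf) (by simpa using hg)]

lemma tsum_abs_conv_le {f f' g g' : ℕ → ℝ}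
    (hf : Summable fun s => |f s|) (hf'n : ∀ s, 0 ≤ f' s) (hf' : Summable f')
    (hgn : ∀ s, 0 ≤ g s) (hg : Summable g) (hg' : Summable fun s => |g' s|)
    (hf'1 : ∑' s, f' s = 1) (hg1 : ∑' s, g s = 1) :
    ∑' s, |conv f g s - conv f' g' s| ≤ (∑' s, |f s - f' s|) + ∑' s, |g s - g' s| := by
  have habsf' : Summable fun s => |f' s| := summable_abs_iff.mpr hf'
  have habsg : Summable fun s => |g s| := summable_abs_iff.mpr hg
  have hF : Summable fun s => |f s - f' s| :=
    summable_abs_iff.mpr ((summable_abs_iff.mp hf).sub hf')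
  have hG : Summable fun s => |g s - g' s| :=
    summable_abs_iff.mpr (hg.sub (summable_abs_iff.mp hg'))
  set F := fun s => |f s - f' s| with hFdef
  set G := fun s => |g s - g' s| with hGdef
  have hconv1 : Summable (conv F g) := conv_summable (by simpa [hFdef] using hF) habsg
  have hconv2 : Summable (conv f' G) := conv_summable habsf' (by simpa [hGdef] using hG)
  have key : ∀ s, |conv f g s - conv f' g' s| ≤ conv F g s + conv f' G s := by
    intro s
    have hsplit : conv f g s - conv f' g' s
        = conv (fun x => f x - f' x) g s + conv f' (fun x => g x - g' x) s := by
      unfold conv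
      rw [← Finset.sum_add_distrib, ← Finset.sum_sub_distrib]
      exact Finset.sum_congr rfl fun kl _ => by ring
    rw [hsplit]
    refine (abs_add_le _ _).trans (add_le_add ?_ ?_)
    · exact abs_conv_le _ _ hgn s
    · exact abs_conv_le' f' _ hf'n s
  have hLHS : Summable fun s => |conv f g s - conv f' g' s| :=
    Summable.of_nonneg_of_le (fun s => abs_nonneg _) key (hconv1.add hconv2)
  calc ∑' s, |conv f g s - conv f' g' s| ≤ ∑' s, (conv F g s + conv f' G s) :=
        Summable.tsum_le_tsum key hLHS (hconv1.add hconv2)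
    _ = (∑' s, conv F g s) + ∑' s, conv f' G s := Summable.tsum_add hconv1 hconv2
    _ = (∑' s, F s) * (∑' s, g s) + (∑' s, f' s) * ∑' s, G s := by
        rw [tsum_conv (by simpa [hFdef, abs_abs] using hF) habsg,
          tsum_conv habsf' (by simpa [hGdef, abs_abs] using hG)]
    _ = (∑' s, F s) + ∑' s, G s := by rw [hg1, hf'1, mul_one, one_mul]

set_option maxHeartbeats 1000000 in
lemma tv_bern_poisson {p : ℝ} (hp0 : 0 ≤ p) (hp1 : p ≤ 1) :
    ∑' s, |bern p s - poissonPMF p s| ≤ 2 * p ^ 2 := by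
  have hsum : Summable fun s => |bern p s - poissonPMF p s| :=
    summable_abs_iff.mpr ((bern_summable p).sub (poisson_summable p))
  have hsum1 : Summable fun s => |bern p (s+1) - poissonPMF p (s+1)| :=
    (summable_nat_add_iff 1).mpr hsum
  have hpsum1 : Summable fun s => poissonPMF p (s+1) :=
    (summable_nat_add_iff 1).mpr (poisson_summable p)
  rw [Summable.tsum_eq_zero_add hsum, Summable.tsum_eq_zero_add hsum1]
  have htail : ∑' s : ℕ, |bern p (s+1+1) - poissonPMF p (s+1+1)| = ∑' s : ℕ, poissonPMF p (s+1+1) := by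
    refine tsum_congr fun s => ?_
    have : bern p (s+1+1) = 0 := by simp [bern]
    rw [this, zero_sub, abs_neg, abs_of_nonneg (poisson_nonneg hp0 _)]
  rw [htail]
  have hptot := tsum_poisson p
  rw [Summable.tsum_eq_zero_add (poisson_summable p), Summable.tsum_eq_zero_add hpsum1] at hptot
  have htail2 : ∑' s : ℕ, poissonPMF p (s+1+1) = 1 - poissonPMF p 0 - poissonPMF p 1 := by
    linarith
  rw [htail2]
  have hp00 : poissonPMF p 0 = Real.exp (-p) := by simp [poissonPMF]
  have hp11 : poissonPMF p 1 = Real.exp (-p) * p := by simp [poissonPMF]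
  have hb0 : bern p 0 = 1 - p := rfl
  have hb1 : bern p 1 = p := rfl
  rw [hp00, hp11, hb0, hb1]
  have he1 : 1 - p ≤ Real.exp (-p) := by
    have := Real.add_one_le_exp (-p); linarith
  have he2 : Real.exp (-p) ≤ 1 := by
    rw [Real.exp_le_one_iff]; linarith
  have ha : |1 - p - Real.exp (-p)| = Real.exp (-p) - (1 - p) := by
    rw [abs_of_nonpos (by linarith)]; ring
  have hb : |p - Real.exp (-p) * p| = p - Real.exp (-p) * p := by
    refine abs_of_nonneg ?_
    nlinarith
  rw [ha, hb]
  nlinarith [mul_nonneg hp0 (by linarith : (0:ℝ) ≤ p + Real.exp (-p) - 1)]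

lemma main_bound : ∀ {K : ℕ} (π : Fin K → ℝ), (∀ k, π k ∈ Set.Icc (0:ℝ) 1) →
    ∑' s, |poiBin π s - poissonPMF (∑ k, π k) s| ≤ 2 * ∑ k, (π k) ^ 2 := by
  intro K
  induction K with
  | zero =>
    intro π hπ
    have h : ∀ s, |poiBin π s - poissonPMF (∑ k, π k) s| = 0 := by
      intro s
      have hz : (∑ k, π k) = 0 := by simp
      rw [hz, poiBin_zero]
      rcases s with _ | s <;> simp [poissonPMF]
    rw [tsum_congr h]
    simp
  | succ K ih =>
    intro π hπ
    set p := π 0 with hp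
    set π' := π ∘ Fin.succ with hπ'def
    have hπ' : ∀ k, π' k ∈ Set.Icc (0:ℝ) 1 := fun k => hπ _
    have hsums : (∑ k, π k) = p + ∑ k, π' k := Fin.sum_univ_succ π
    have h1 : ∀ s, poiBin π s = conv (bern p) (poiBin π') s := poiBin_succ π
    have h2 : ∀ s, poissonPMF (p + ∑ k, π' k) s
        = conv (poissonPMF p) (poissonPMF (∑ k, π' k)) s := fun s => (conv_poisson _ _ s).symm
    have hcongr : ∀ s, |poiBin π s - poissonPMF (∑ k, π k) s|
        = |conv (bern p) (poiBin π') s - conv (poissonPMF p) (poissonPMF (∑ k, π' k)) s| := by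
      intro s; rw [h1, hsums, h2]
    rw [tsum_congr hcongr]
    have hstep := tsum_abs_conv_le
      (f := bern p) (f' := poissonPMF p) (g := poiBin π') (g' := poissonPMF (∑ k, π' k))
      (summable_abs_iff.mpr (bern_summable p))
      (poisson_nonneg (hπ 0).1)
      (poisson_summable p)
      (poiBin_nonneg hπ')
      (poiBin_summable π')
      (summable_abs_iff.mpr (poisson_summable _))
      (tsum_poisson p)
      (tsum_poiBin π')
    refine hstep.trans ?_
    have hb := tv_bern_poisson (hπ 0).1 (hπ 0).2
    have hi := ih π' hπ'
    have hsq : (∑ k, (π k) ^ 2) = p ^ 2 + ∑ k, (π' k) ^ 2 :=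
      Fin.sum_univ_succ fun k => (π k) ^ 2
    rw [hsq]
    linarith

theorem law_of_rare_events {K : ℕ} (π : Fin K → ℝ)
    (hπ : ∀ k, π k ∈ Set.Icc (0 : ℝ) 1) (lam : ℝ) (hlam : ∑ k, π k = lam) :
    (1 / 2) * ∑' s : ℕ, |poiBin π s - poissonPMF lam s| ≤ ∑ k, (π k) ^ 2 := by
  rw [← hlam]
  have := main_bound π hπ
  linarith
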